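/- For m ≥ 4, define Θ_m = ∑_{i=4}^{m} (t_{i-4} − k_{i-3} + 1). Then 2·Θ_m = t_{m-2} − t_{m-3} + 2t_{m-4} + m − 6. -/

import Mathlib

/-- Tribonacci numbers, index-shifted so that `trib n` represents t_{n-2}:
`trib 0 = t₋₂ = 0`, `trib 1 = t₋₁ = 1`, `trib 2 = t₀ = 1`, and
`trib (n+3) = trib (n+2) + trib (n+1) + trib n`. -/
def trib : ℕ → ℕ
  | 0 => 0
  | 1 => 1
  | 2 => 1
  | n + 3 => trib (n + 2) + trib (n + 1) + trib n

/-- Kernel numbers: k₀ = 0, k₁ = k₂ = 1, k_m = k_{m-1} + k_{m-2} + k_{m-3} - 1 for m ≥ 3. -/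
def ker : ℕ → ℕ
  | 0 => 0
  | 1 => 1
  | 2 => 1
  | n + 3 => ker (n + 2) + ker (n + 1) + ker n - 1

lemma ker_pos : ∀ n, 1 ≤ ker (n + 1)
  | 0 => le_refl _
  | 1 => le_refl _
  | n + 2 => by
      have h1 : 1 ≤ ker (n + 2) := ker_pos (n + 1)
      have h2 : 1 ≤ ker (n + 1) := ker_pos n
      show 1 ≤ ker (n + 2) + ker (n + 1) + ker n - 1
      omega

lemma ker_int (n : ℕ) :
    (ker (n + 3) : ℤ) = ker (n + 2) + ker (n + 1) + ker n - 1 := by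
  have h : 1 ≤ ker (n + 2) := ker_pos (n + 1)
  show ((ker (n + 2) + ker (n + 1) + ker n - 1 : ℕ) : ℤ) = _
  omega

lemma key : ∀ n, 2 * (ker (n + 2) : ℤ) = trib (n + 2) - trib n + 1
  | 0 => by norm_num [ker, trib]
  | 1 => by norm_num [ker, trib]
  | 2 => by norm_num [ker, trib]
  | n + 3 => by
      have h1 := key (n + 2)
      have h2 := key (n + 1)
      have h3 := key n
      have e1 : (trib (n + 5) : ℤ) = trib (n + 4) + trib (n + 3) + trib (n + 2) := by
        rw [show n + 5 = (n + 2) + 3 from rfl, trib]; push_cast; ring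
      have e2 : (trib (n + 3) : ℤ) = trib (n + 2) + trib (n + 1) + trib n := by
        rw [trib]; push_cast; ring
      have e3 := ker_int (n + 2)
      rw [show n + 3 + 2 = n + 2 + 3 from rfl] at *
      rw [e3]
      linarith

/-- For m ≥ 4, with Θ_m = ∑_{i=4}^{m} (t_{i-4} − k_{i-3} + 1), we have
2·Θ_m = t_{m-2} − t_{m-3} + 2t_{m-4} + m − 6 (stated over ℤ; `trib (i-2)` = t_{i-4},
`trib m` = t_{m-2}, `trib (m-1)` = t_{m-3}, `trib (m-2)` = t_{m-4}). -/
theorem two_mul_Theta (m : ℕ) (hm : 4 ≤ m) :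
    2 * ∑ i ∈ Finset.Icc 4 m, ((trib (i - 2) : ℤ) - ker (i - 3) + 1) =
      (trib m : ℤ) - trib (m - 1) + 2 * trib (m - 2) + m - 6 := by
  obtain ⟨k, rfl⟩ : ∃ k, m = k + 4 := ⟨m - 4, by omega⟩
  clear hm
  induction k with
  | zero =>
      norm_num [Finset.Icc_self, trib, ker]
  | succ k ih =>
      rw [show k + 1 + 4 = (k + 4) + 1 from rfl,
        Finset.sum_Icc_succ_top (by omega : 4 ≤ k + 4 + 1)]
      have hidx1 : k + 4 + 1 - 2 = k + 3 := by omega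
      have hidx2 : k + 4 + 1 - 3 = k + 2 := by omega
      rw [hidx1, hidx2, mul_add, ih]
      have hk := key k
      have e1 : (trib (k + 5) : ℤ) = trib (k + 4) + trib (k + 3) + trib (k + 2) := by
        rw [show k + 5 = (k + 2) + 3 from rfl, trib]; push_cast; ring
      have e2 : (trib (k + 4) : ℤ) = trib (k + 3) + trib (k + 2) + trib (k + 1) := by
        rw [show k + 4 = (k + 1) + 3 from rfl, trib]; push_cast; ring
      have e3 : (trib (k + 3) : ℤ) = trib (k + 2) + trib (k + 1) + trib k := by
        rw [trib]; push_cast; ring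
      have h1 : k + 4 - 1 = k + 3 := by omega
      have h2 : k + 4 - 2 = k + 2 := by omega
      rw [h1, h2]
      push_cast
      linarith
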